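/- Let F and G be Borel probability measures on ℝ, write S(w) := F([w,∞)), and set c := ∫ S(w) dG(w); assume 0 < c. Define the observable truncation distribution G₀ := c⁻¹ • (G.withDensity S). Then: (i) for every Borel set A ⊆ ℝ, (F.prod G)({(t,w) : w ∈ A and w ≤ t}) = ∫_A S(w) dG(w), so in particular (F.prod G)({(t,w) : w ≤ t}) = c; and (ii) if S(w) > 0 for G-almost every w, then ∫ S(w)⁻¹ dG₀(w) = c⁻¹ and, for every Borel set A ⊆ ℝ, G(A) = c · ∫_A S(w)⁻¹ dG₀(w). (Identification of the target truncation distribution by inverse-probability-of-survival reweighting of the observable truncation distribution, with normalizing constant γ = 1/P(T ≥ W).) -/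

import Mathlib

open Set MeasureTheory
open scoped ENNReal

/-- Identification of the target truncation distribution by inverse-probability-of-survival
reweighting of the observable truncation distribution `G₀ = c⁻¹ • (G.withDensity S)`,
where `S w = F [w,∞)` and `c = ∫ S dG = P(T ≥ W)`. -/
theorem truncation_distribution_identification
    (F G : Measure ℝ) [IsProbabilityMeasure F] [IsProbabilityMeasure G]
    (S : ℝ → ℝ≥0∞) (hS : ∀ w, S w = F (Ici w))
    (c : ℝ≥0∞) (hc : c = ∫⁻ w, S w ∂G) (hcpos : 0 < c)
    (G₀ : Measure ℝ) (hG₀ : G₀ = c⁻¹ • (G.withDensity S)) :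
    ((∀ A : Set ℝ, MeasurableSet A →
        (F.prod G) {p : ℝ × ℝ | p.2 ∈ A ∧ p.2 ≤ p.1} = ∫⁻ w in A, S w ∂G)
      ∧ (F.prod G) {p : ℝ × ℝ | p.2 ≤ p.1} = c)
    ∧ ((∀ᵐ w ∂G, 0 < S w) →
        (∫⁻ w, (S w)⁻¹ ∂G₀) = c⁻¹
        ∧ ∀ A : Set ℝ, MeasurableSet A →
            G A = c * ∫⁻ w in A, (S w)⁻¹ ∂G₀) := by
  have hSm : Measurable S := by
    have hanti : Antitone S := by
      intro a b hab
      rw [hS a, hS b]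
      exact measure_mono (Ici_subset_Ici.mpr hab)
    exact hanti.measurable
  have hS1 : ∀ w, S w ≤ 1 := fun w => by rw [hS w]; exact prob_le_one
  have hle : MeasurableSet {p : ℝ × ℝ | p.2 ≤ p.1} :=
    measurableSet_le measurable_snd measurable_fst
  have key : ∀ A : Set ℝ, MeasurableSet A →
      (F.prod G) {p : ℝ × ℝ | p.2 ∈ A ∧ p.2 ≤ p.1} = ∫⁻ w in A, S w ∂G := by
    intro A hA
    have hset : MeasurableSet {p : ℝ × ℝ | p.2 ∈ A ∧ p.2 ≤ p.1} := by
      exact (measurable_snd hA).inter hle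
    rw [Measure.prod_apply_symm hset]
    have : ∀ w, F ((fun t => (t, w)) ⁻¹' {p : ℝ × ℝ | p.2 ∈ A ∧ p.2 ≤ p.1})
        = A.indicator S w := by
      intro w
      by_cases hw : w ∈ A
      · have : (fun t => (t, w)) ⁻¹' {p : ℝ × ℝ | p.2 ∈ A ∧ p.2 ≤ p.1} = Ici w := by
          ext t; simp [hw]
        rw [this, indicator_of_mem hw, hS w]
      · have : (fun t => (t, w)) ⁻¹' {p : ℝ × ℝ | p.2 ∈ A ∧ p.2 ≤ p.1} = ∅ := by
          ext t; simp [hw]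
        rw [this, indicator_of_notMem hw, measure_empty]
    simp only [this]
    rw [lintegral_indicator hA]
  have key2 : (F.prod G) {p : ℝ × ℝ | p.2 ≤ p.1} = c := by
    have := key univ MeasurableSet.univ
    simpa [hc] using this
  refine ⟨⟨key, key2⟩, fun hpos => ?_⟩
  have hcne : c ≠ 0 := hcpos.ne'
  have hcnetop : c ≠ ⊤ := by
    have : c ≤ 1 := by
      rw [hc]
      calc ∫⁻ w, S w ∂G ≤ ∫⁻ _, 1 ∂G := lintegral_mono hS1
        _ = 1 := by simp
    exact (this.trans_lt ENNReal.one_lt_top).ne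
  have haeG : ∀ᵐ w ∂G, S w * (S w)⁻¹ = 1 := by
    filter_upwards [hpos] with w hw
    exact ENNReal.mul_inv_cancel hw.ne' ((hS1 w).trans_lt ENNReal.one_lt_top).ne
  have hinv : ∫⁻ w, (S w)⁻¹ ∂G₀ = c⁻¹ := by
    rw [hG₀, lintegral_smul_measure,
      lintegral_withDensity_eq_lintegral_mul _ hSm (g := fun a => (S a)⁻¹) (hSm.inv)]
    have : ∫⁻ w, S w * (S w)⁻¹ ∂G = 1 := by
      rw [lintegral_congr_ae haeG]; simp
    simp only [Pi.mul_apply, smul_eq_mul] at this ⊢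
    rw [this, mul_one]
  refine ⟨hinv, fun A hA => ?_⟩
  rw [hG₀, Measure.restrict_smul, lintegral_smul_measure,
    restrict_withDensity hA,
    lintegral_withDensity_eq_lintegral_mul _ hSm (g := fun a => (S a)⁻¹) (hSm.inv)]
  have : ∫⁻ w in A, S w * (S w)⁻¹ ∂G = G A := by
    rw [lintegral_congr_ae (ae_restrict_of_ae haeG)]
    simp
  simp only [Pi.mul_apply, smul_eq_mul] at this ⊢
  rw [this, ← mul_assoc, ENNReal.mul_inv_cancel hcne hcnetop, one_mul]
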